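/- For every natural number N, the vector v ∈ ℝ^{N+1} with components v_n = sin((n+1)π/(N+2)), n = 0,…,N, is nonzero and is an eigenvector of the (N+1)×(N+1) tridiagonal matrix M̃_{N+1} with eigenvalue 2cos(π/(N+2)): M̃_{N+1} v = 2cos(π/(N+2))·v. Moreover 2cos(π/(N+2)) is the largest eigenvalue: every real eigenvalue λ of M̃_{N+1} satisfies λ ≤ 2cos(π/(N+2)). Consequently the maximum average fidelity of phase alignment with at most N photons is f̄_max = (1/2)(1 + cos(π/(N+2))). -/

import Mathlib

/-!
STATEMENT 13: For every natural number N, the vector v with components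
v_n = sin((n+1)π/(N+2)), n = 0,…,N, is nonzero and is an eigenvector of the
(N+1)×(N+1) tridiagonal matrix M̃_{N+1} with eigenvalue 2cos(π/(N+2)); moreover
2cos(π/(N+2)) is the largest eigenvalue.  Consequently the maximum average fidelity
of phase alignment with at most N photons is f̄_max = 1/2 + λ_max/4 = (1/2)(1 + cos(π/(N+2))).
-/

/-- The k×k tridiagonal matrix with entries 1 exactly when |a−b| = 1. -/
def tridiag (k : ℕ) : Matrix (Fin k) (Fin k) ℝ :=
  Matrix.of fun a b : Fin k =>
    if (a : ℕ) + 1 = (b : ℕ) ∨ (b : ℕ) + 1 = (a : ℕ) then (1 : ℝ) else 0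

/-- The vector v_n = sin((n+1)π/(N+2)), n = 0, …, N. -/
noncomputable def sineVec (N : ℕ) : Fin (N + 1) → ℝ := fun n =>
  Real.sin ((((n : ℕ) : ℝ) + 1) * Real.pi / ((N : ℝ) + 2))

lemma sineVec_pos (N : ℕ) (a : Fin (N + 1)) : 0 < sineVec N a := by
  have ha : ((a : ℕ) : ℝ) + 1 ≤ (N : ℝ) + 1 := by
    have := a.isLt
    have : ((a : ℕ) : ℝ) ≤ (N : ℝ) := by exact_mod_cast Nat.lt_succ_iff.mp this
    linarith
  have hpi := Real.pi_pos
  apply Real.sin_pos_of_pos_of_lt_pi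
  · positivity
  · rw [div_lt_iff₀ (by positivity)]
    nlinarith

lemma sum_ite_val {k : ℕ} (u : Fin k → ℝ) (m : ℕ) :
    (∑ b : Fin k, if m = (b : ℕ) then u b else 0) = if h : m < k then u ⟨m, h⟩ else 0 := by
  by_cases h : m < k
  · rw [dif_pos h, Finset.sum_eq_single (⟨m, h⟩ : Fin k)]
    · simp
    · intro b _ hb
      rw [if_neg]
      intro he
      exact hb (Fin.ext he.symm)
    · simp
  · rw [dif_neg h]
    apply Finset.sum_eq_zero
    intro b _
    rw [if_neg]
    intro he
    exact h (he ▸ b.isLt)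

lemma tridiag_mulVec (k : ℕ) (u : Fin k → ℝ) (a : Fin k) :
    (tridiag k).mulVec u a =
      (if h : (a : ℕ) + 1 < k then u ⟨(a : ℕ) + 1, h⟩ else 0)
      + (if 0 < (a : ℕ) then u ⟨(a : ℕ) - 1, by omega⟩ else 0) := by
  have hsplit : ∀ b : Fin k,
      tridiag k a b * u b =
        (if (a : ℕ) + 1 = (b : ℕ) then u b else 0)
        + (if ((a : ℕ) - 1 = (b : ℕ)) ∧ 0 < (a : ℕ) then u b else 0) := by
    intro b
    simp only [tridiag, Matrix.of_apply]
    split_ifs <;> first | ring1 | (exfalso; omega)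
  simp only [Matrix.mulVec, dotProduct]
  rw [Finset.sum_congr rfl (fun b _ => hsplit b), Finset.sum_add_distrib]
  congr 1
  · rw [sum_ite_val]
  · by_cases h0 : 0 < (a : ℕ)
    · rw [if_pos h0]
      have : ∀ b : Fin k, (if ((a : ℕ) - 1 = (b : ℕ)) ∧ 0 < (a : ℕ) then u b else 0)
          = (if (a : ℕ) - 1 = (b : ℕ) then u b else 0) := by
        intro b; simp [h0]
      rw [Finset.sum_congr rfl (fun b _ => this b), sum_ite_val, dif_pos (by omega : (a : ℕ) - 1 < k)]
    · rw [if_neg h0]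
      apply Finset.sum_eq_zero
      intro b _
      rw [if_neg]
      rintro ⟨-, h⟩
      exact h0 h

lemma tridiag_symm (k : ℕ) (a b : Fin k) : tridiag k a b = tridiag k b a := by
  simp [tridiag, or_comm]

lemma tridiag_nonneg (k : ℕ) (a b : Fin k) : 0 ≤ tridiag k a b := by
  simp only [tridiag, Matrix.of_apply]
  split_ifs <;> norm_num

lemma sineVec_eigen (N : ℕ) :
    (tridiag (N + 1)).mulVec (sineVec N)
      = (2 * Real.cos (Real.pi / ((N : ℝ) + 2))) • sineVec N := by
  set θ : ℝ := Real.pi / ((N : ℝ) + 2) with hθ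
  have hden : ((N : ℝ) + 2) ≠ 0 := by positivity
  -- the extended sequence
  set s : ℕ → ℝ := fun n => Real.sin ((n : ℝ) * θ) with hs
  have hvs : ∀ b : Fin (N + 1), sineVec N b = s ((b : ℕ) + 1) := by
    intro b
    simp only [sineVec, hs, hθ]
    push_cast
    ring_nf
  have hs0 : s 0 = 0 := by simp [hs]
  have hstop : s (N + 2) = 0 := by
    have h2 : ((N : ℝ) + 2) * θ = Real.pi := by
      rw [hθ]; field_simp
    show Real.sin (((N + 2 : ℕ) : ℝ) * θ) = 0
    push_cast
    rw [h2, Real.sin_pi]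
  have hrec : ∀ n : ℕ, s n + s (n + 2) = 2 * Real.cos θ * s (n + 1) := by
    intro n
    have h1 : ((n : ℝ)) * θ = ((n : ℝ) + 1) * θ - θ := by ring
    have h2 : (((n + 2 : ℕ)) : ℝ) * θ = ((n : ℝ) + 1) * θ + θ := by push_cast; ring
    have h3 : (((n + 1 : ℕ)) : ℝ) * θ = ((n : ℝ) + 1) * θ := by push_cast; ring
    simp only [hs, h1, h2, h3, Real.sin_add, Real.sin_sub]
    ring
  funext a
  rw [tridiag_mulVec]
  simp only [Pi.smul_apply, smul_eq_mul]
  rw [hvs a]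
  have hfirst : (if h : (a : ℕ) + 1 < N + 1 then sineVec N ⟨(a : ℕ) + 1, h⟩ else 0)
      = s ((a : ℕ) + 2) := by
    by_cases h : (a : ℕ) + 1 < N + 1
    · rw [dif_pos h, hvs]
    · rw [dif_neg h]
      have : (a : ℕ) = N := by have := a.isLt; omega
      rw [this, hstop]
  have hsecond : (if 0 < (a : ℕ) then sineVec N ⟨(a : ℕ) - 1, by omega⟩ else 0)
      = s (a : ℕ) := by
    by_cases h : 0 < (a : ℕ)
    · rw [if_pos h, hvs]
      show s ((a : ℕ) - 1 + 1) = s (a : ℕ)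
      congr 1
      omega
    · rw [if_neg h]
      have : (a : ℕ) = 0 := by omega
      rw [this, hs0]
  rw [hfirst, hsecond]
  have := hrec (a : ℕ)
  linarith

theorem tridiag_top_eigenvector_and_max_fidelity (N : ℕ) :
    sineVec N ≠ 0
    ∧ (tridiag (N + 1)).mulVec (sineVec N)
        = (2 * Real.cos (Real.pi / ((N : ℝ) + 2))) • sineVec N
    ∧ (∀ lam : ℝ, (∃ w : Fin (N + 1) → ℝ, w ≠ 0 ∧ (tridiag (N + 1)).mulVec w = lam • w) →
        lam ≤ 2 * Real.cos (Real.pi / ((N : ℝ) + 2)))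
    ∧ (1 / 2 : ℝ) + (2 * Real.cos (Real.pi / ((N : ℝ) + 2))) / 4
        = (1 / 2) * (1 + Real.cos (Real.pi / ((N : ℝ) + 2))) := by
  set μ : ℝ := 2 * Real.cos (Real.pi / ((N : ℝ) + 2)) with hμ
  set v : Fin (N + 1) → ℝ := sineVec N with hv
  have hvpos : ∀ a, 0 < v a := sineVec_pos N
  have hveig : (tridiag (N + 1)).mulVec v = μ • v := sineVec_eigen N
  refine ⟨?_, hveig, ?_, by ring⟩
  · intro h
    have := hvpos 0
    rw [h] at this
    exact lt_irrefl 0 this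
  · rintro lam ⟨w, hw, hweig⟩
    set M := tridiag (N + 1) with hM
    have hS : 0 < ∑ a, w a ^ 2 := by
      obtain ⟨a, ha⟩ := Function.ne_iff.mp hw
      simp only [Pi.zero_apply] at ha
      exact Finset.sum_pos' (fun i _ => sq_nonneg _)
        ⟨a, Finset.mem_univ a, (sq_nonneg (w a)).lt_of_ne' (pow_ne_zero 2 ha)⟩
    have key : lam * ∑ a, w a ^ 2 ≤ μ * ∑ a, w a ^ 2 := by
      have hlhs : lam * ∑ a, w a ^ 2 = ∑ a : Fin (N+1), ∑ b : Fin (N+1), M a b * w b * w a := by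
        rw [Finset.mul_sum]
        apply Finset.sum_congr rfl
        intro a _
        have : ∑ b, M a b * w b * w a = (M.mulVec w a) * w a := by
          simp [Matrix.mulVec, dotProduct, Finset.sum_mul]
        rw [this, hweig]
        simp [Pi.smul_apply]
        ring
      have hrhs : μ * ∑ a, w a ^ 2 = ∑ a : Fin (N+1), ∑ b : Fin (N+1), M a b * v b * (w a ^ 2 / v a) := by
        rw [Finset.mul_sum]
        apply Finset.sum_congr rfl
        intro a _
        have h1 : ∑ b, M a b * v b * (w a ^ 2 / v a) = (M.mulVec v a) * (w a ^ 2 / v a) := by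
          simp [Matrix.mulVec, dotProduct, Finset.sum_mul]
        rw [h1, hveig]
        simp only [Pi.smul_apply, smul_eq_mul]
        field_simp [(hvpos a).ne']
      -- termwise bound
      have hterm : ∀ a b : Fin (N+1), M a b * w b * w a
          ≤ (M a b * v b * (w a ^ 2 / v a) + M a b * v a * (w b ^ 2 / v b)) / 2 := by
        intro a b
        have hva := hvpos a
        have hvb := hvpos b
        have hMnn := tridiag_nonneg (N+1) a b
        have hamgm : w b * w a ≤ (v b * (w a ^ 2 / v a) + v a * (w b ^ 2 / v b)) / 2 := by
          rw [mul_div_assoc', mul_div_assoc', div_add_div _ _ hva.ne' hvb.ne', div_div,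
            le_div_iff₀ (by positivity)]
          nlinarith [sq_nonneg (v b * w a - v a * w b), mul_pos hva hvb]
        calc M a b * w b * w a = M a b * (w b * w a) := by ring
          _ ≤ M a b * ((v b * (w a ^ 2 / v a) + v a * (w b ^ 2 / v b)) / 2) :=
              mul_le_mul_of_nonneg_left hamgm hMnn
          _ = (M a b * v b * (w a ^ 2 / v a) + M a b * v a * (w b ^ 2 / v b)) / 2 := by ring
      have hsym : ∑ a : Fin (N+1), ∑ b : Fin (N+1), M a b * v a * (w b ^ 2 / v b)
          = ∑ a : Fin (N+1), ∑ b : Fin (N+1), M a b * v b * (w a ^ 2 / v a) := by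
        rw [Finset.sum_comm]
        apply Finset.sum_congr rfl
        intro a _
        apply Finset.sum_congr rfl
        intro b _
        rw [hM, tridiag_symm]
      calc lam * ∑ a, w a ^ 2
          = ∑ a : Fin (N+1), ∑ b : Fin (N+1), M a b * w b * w a := hlhs
        _ ≤ ∑ a : Fin (N+1), ∑ b : Fin (N+1),
              (M a b * v b * (w a ^ 2 / v a) + M a b * v a * (w b ^ 2 / v b)) / 2 := by
            apply Finset.sum_le_sum
            intro a _
            exact Finset.sum_le_sum fun b _ => hterm a b
        _ = ((∑ a : Fin (N+1), ∑ b : Fin (N+1), M a b * v b * (w a ^ 2 / v a))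
              + ∑ a : Fin (N+1), ∑ b : Fin (N+1), M a b * v a * (w b ^ 2 / v b)) / 2 := by
            simp only [← Finset.sum_add_distrib, ← Finset.sum_div]
        _ = ∑ a : Fin (N+1), ∑ b : Fin (N+1), M a b * v b * (w a ^ 2 / v a) := by
            rw [hsym]; ring
        _ = μ * ∑ a, w a ^ 2 := hrhs.symm
    exact le_of_mul_le_mul_right key hS
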